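/- Let $C = \{(c_0, c_1, \dots, c_k) \in \mathbb{N}^{k+1} : 1 = c_0 < c_1 < \cdots < c_k \le n+1 \}$ with partial order $c \preceq c'$ iff $c_j \le c'_j$ for all $j$. For $b = (b_{ji}) \in B^{k,\infty}$ define $\Delta_b(c) = \sum_{j=1}^k \sum_{c_{j-1} < i < c_j} b_{ji}$. Then there exists a unique $c^{(e)} \in C$ such that for all $c \in C$: $\Delta_b(c^{(e)}) \le \Delta_b(c)$ if $c^{(e)} \preceq c$, and $\Delta_b(c^{(e)}) < \Delta_b(c)$ if $c^{(e)} \not\preceq c$. -/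

import Mathlib

/-- Validity of an index `(j,i)` of the arrays in `B^{k,∞}`. -/
def Bidx (n k j i : ℕ) : Prop := 1 ≤ j ∧ j ≤ k ∧ j ≤ i ∧ i ≤ j + (n + 1 - k)

/-- The crystal `B^{k,∞}`: integer arrays `(b_{ji})`, `1 ≤ j ≤ k`,
`j ≤ i ≤ j + k'` with `k' = n+1-k`, all of whose row sums vanish. -/
def BkInf (n k : ℕ) : Set (ℕ → ℕ → ℤ) :=
  {b | (∀ j i, ¬ Bidx n k j i → b j i = 0) ∧
    ∀ j, 1 ≤ j → j ≤ k → ∑ i ∈ Finset.Icc j (j + (n + 1 - k)), b j i = 0}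

/-- Membership in `C = {(c₀,…,c_k) : 1 = c₀ < c₁ < ⋯ < c_k ≤ n+1}`. -/
def IsC (n k : ℕ) (c : Fin (k + 1) → ℕ) : Prop :=
  c 0 = 1 ∧ StrictMono c ∧ c (Fin.last k) ≤ n + 1

/-- `Δ_b(c) = ∑_{j=1}^k ∑_{c_{j-1} < i < c_j} b_{ji}`. -/
def Delta (k : ℕ) (b : ℕ → ℕ → ℤ) (c : Fin (k + 1) → ℕ) : ℤ :=
  ∑ j : Fin k, ∑ i ∈ Finset.Ioo (c j.castSucc) (c j.succ), b ((j : ℕ) + 1) i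

/-- Partial sums of a row of `b`. -/
def Spart (b : ℕ → ℕ → ℤ) (j x : ℕ) : ℤ := ∑ i ∈ Finset.Ioc 0 x, b j i

lemma sum_Ioo_eq (b : ℕ → ℕ → ℤ) (j a e : ℕ) (h : a < e) :
    ∑ i ∈ Finset.Ioo a e, b j i = Spart b j (e - 1) - Spart b j a := by
  have he : 1 ≤ e := Nat.one_le_of_lt (Nat.lt_of_le_of_lt (Nat.zero_le a) h)
  have hIoo : Finset.Ioo a e = Finset.Ioc a (e - 1) := by
    ext i
    simp only [Finset.mem_Ioo, Finset.mem_Ioc]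
    omega
  have hcons := Finset.sum_Ioc_consecutive (f := b j) (Nat.zero_le a)
    (by omega : a ≤ e - 1)
  rw [hIoo]
  unfold Spart
  linarith [hcons]

lemma Delta_eq (k : ℕ) (b : ℕ → ℕ → ℤ) (c : Fin (k + 1) → ℕ) (hc : StrictMono c) :
    Delta k b c = ∑ j : Fin k,
      (Spart b ((j : ℕ) + 1) (c j.succ - 1) - Spart b ((j : ℕ) + 1) (c j.castSucc)) := by
  unfold Delta
  refine Finset.sum_congr rfl fun j _ => ?_
  exact sum_Ioo_eq b _ _ _ (hc (Fin.castSucc_lt_succ (i := j)))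

lemma strictMono_min {k : ℕ} {c c' : Fin (k + 1) → ℕ} (hc : StrictMono c)
    (hc' : StrictMono c') : StrictMono fun j => min (c j) (c' j) := by
  intro a b hab
  exact lt_min (lt_of_le_of_lt (min_le_left _ _) (hc hab))
    (lt_of_le_of_lt (min_le_right _ _) (hc' hab))

lemma strictMono_max {k : ℕ} {c c' : Fin (k + 1) → ℕ} (hc : StrictMono c)
    (hc' : StrictMono c') : StrictMono fun j => max (c j) (c' j) := by
  intro a b hab
  exact max_lt (lt_of_lt_of_le (hc hab) (le_max_left _ _))
    (lt_of_lt_of_le (hc' hab) (le_max_right _ _))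

lemma IsC_min {n k : ℕ} {c c' : Fin (k + 1) → ℕ} (hc : IsC n k c) (hc' : IsC n k c') :
    IsC n k fun j => min (c j) (c' j) := by
  obtain ⟨h0, hm, hl⟩ := hc
  obtain ⟨h0', hm', hl'⟩ := hc'
  exact ⟨by simp [h0, h0'], strictMono_min hm hm',
    le_trans (min_le_left _ _) hl⟩

lemma IsC_max {n k : ℕ} {c c' : Fin (k + 1) → ℕ} (hc : IsC n k c) (hc' : IsC n k c') :
    IsC n k fun j => max (c j) (c' j) := by
  obtain ⟨h0, hm, hl⟩ := hc
  obtain ⟨h0', hm', hl'⟩ := hc'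
  exact ⟨by simp [h0, h0'], strictMono_max hm hm', max_le hl hl'⟩

/-- Modularity of `Δ_b` on the lattice of increasing sequences. -/
lemma Delta_mod (k : ℕ) (b : ℕ → ℕ → ℤ) (c c' : Fin (k + 1) → ℕ)
    (hc : StrictMono c) (hc' : StrictMono c') :
    Delta k b (fun j => min (c j) (c' j)) + Delta k b (fun j => max (c j) (c' j)) =
      Delta k b c + Delta k b c' := by
  rw [Delta_eq k b _ (strictMono_min hc hc'), Delta_eq k b _ (strictMono_max hc hc'),
    Delta_eq k b c hc, Delta_eq k b c' hc', ← Finset.sum_add_distrib,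
    ← Finset.sum_add_distrib]
  refine Finset.sum_congr rfl fun j _ => ?_
  rcases le_total (c j.succ) (c' j.succ) with h1 | h1 <;>
    rcases le_total (c j.castSucc) (c' j.castSucc) with h2 | h2 <;>
    simp only [min_eq_left h1, max_eq_right h1, min_eq_right h1, max_eq_left h1,
      min_eq_left h2, max_eq_right h2, min_eq_right h2, max_eq_left h2] <;> ring

/-- there is a unique `c⁽ᵉ⁾ ∈ C` such that for every `c ∈ C`,
`Δ_b(c⁽ᵉ⁾) ≤ Δ_b(c)` when `c⁽ᵉ⁾ ≼ c`, and `Δ_b(c⁽ᵉ⁾) < Δ_b(c)` when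
`c⁽ᵉ⁾ ⋠ c` (where `≼` is the componentwise order on `C`). -/
theorem stmt7 (n k : ℕ) (hk : 1 ≤ k) (hkn : k ≤ n)
    (b : ℕ → ℕ → ℤ) (hb : b ∈ BkInf n k) :
    ∃! ce : Fin (k + 1) → ℕ, IsC n k ce ∧ ∀ c, IsC n k c →
      ((∀ j, ce j ≤ c j) → Delta k b ce ≤ Delta k b c) ∧
      (¬ (∀ j, ce j ≤ c j) → Delta k b ce < Delta k b c) := by
  classical
  -- The set C is finite and nonempty
  set Cs : Set (Fin (k + 1) → ℕ) := {c | IsC n k c} with hCs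
  have hfin : Cs.Finite := by
    apply Set.Finite.subset (Set.Finite.pi (fun _ : Fin (k + 1) => Set.finite_Iic (n + 1)))
    intro c hc j _
    exact le_trans (hc.2.1.monotone (Fin.le_last j)) hc.2.2
  have hne : Cs.Nonempty := by
    refine ⟨fun j => (j : ℕ) + 1, ?_, ?_, ?_⟩
    · simp
    · intro a b' hab
      simpa using Fin.lt_iff_val_lt_val.mp hab
    · simp [Fin.last]; omega
  -- minimize Delta over C
  obtain ⟨c₀, hc₀C, hc₀min⟩ := Set.exists_min_image Cs (Delta k b) hfin hne
  set m : ℤ := Delta k b c₀ with hm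
  -- the set of minimizers
  set Ms : Set (Fin (k + 1) → ℕ) := {c ∈ Cs | Delta k b c = m} with hMs
  have hMfin : Ms.Finite := hfin.subset fun c hc => hc.1
  have hMne : Ms.Nonempty := ⟨c₀, hc₀C, rfl⟩
  -- minimize the coordinate sum over minimizers
  obtain ⟨ce, hceM, hcemin⟩ := Set.exists_min_image Ms (fun c => ∑ j, c j) hMfin hMne
  have hceC : IsC n k ce := hceM.1
  have hceD : Delta k b ce = m := hceM.2
  -- key: ce is componentwise below every minimizer
  have key : ∀ c ∈ Ms, ∀ j, ce j ≤ c j := by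
    intro c hcM j
    set mn : Fin (k + 1) → ℕ := fun j => min (ce j) (c j) with hmn
    set mx : Fin (k + 1) → ℕ := fun j => max (ce j) (c j) with hmx
    have hmnC : IsC n k mn := IsC_min hceC hcM.1
    have hmxC : IsC n k mx := IsC_max hceC hcM.1
    have hmod := Delta_mod k b ce c hceC.2.1 hcM.1.2.1
    have h1 : m ≤ Delta k b mn := hc₀min mn hmnC
    have h2 : m ≤ Delta k b mx := hc₀min mx hmxC
    have hmnD : Delta k b mn = m := by
      rw [hceD, hcM.2] at hmod; linarith
    have hmnM : mn ∈ Ms := ⟨hmnC, hmnD⟩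
    have hsum : ∑ j, ce j ≤ ∑ j, mn j := hcemin mn hmnM
    have hle : ∀ i ∈ Finset.univ, mn i ≤ ce i := fun i _ => min_le_left _ _
    have heq : ∀ i ∈ Finset.univ, mn i = ce i := by
      intro i hi
      by_contra hne'
      have : ∑ j, mn j < ∑ j, ce j :=
        Finset.sum_lt_sum hle ⟨i, hi, lt_of_le_of_ne (hle i hi) hne'⟩
      omega
    have := heq j (Finset.mem_univ j)
    simp only [hmn] at this
    omega
  have prop2 : ∀ c, IsC n k c → ¬(∀ j, ce j ≤ c j) → Delta k b ce < Delta k b c := by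
    intro c hcC hnle
    by_contra hlt
    push_neg at hlt
    have hcm : Delta k b c = m := le_antisymm (by rw [← hceD]; exact hlt) (hc₀min c hcC)
    exact hnle (key c ⟨hcC, hcm⟩)
  refine ⟨ce, ⟨hceC, fun c hcC => ⟨fun _ => by rw [hceD]; exact hc₀min c hcC,
    prop2 c hcC⟩⟩, ?_⟩
  rintro ce' ⟨hce'C, hce'P⟩
  by_cases h1 : ∀ j, ce' j ≤ ce j
  · by_cases h2 : ∀ j, ce j ≤ ce' j
    · funext j; exact le_antisymm (h1 j) (h2 j)
    · exact absurd ((hce'P ce hceC).1 h1) (not_le.mpr (prop2 ce' hce'C h2))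
  · have ha := (hce'P ce hceC).2 h1
    have hbb : Delta k b ce ≤ Delta k b ce' := by rw [hceD]; exact hc₀min ce' hce'C
    exact absurd ha (not_lt.mpr hbb)
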